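/- For any weighted forest G=(V,E,μ,w) with n vertices and any 1 ≤ k ≤ n, the Cheeger k-constant satisfies h_k(G) = ℓ_k(G) = ℓ̲_k(G); that is, min over subpartitions (A₁,…,A_k) of max_i φ(A_i) equals max over subpartitions (A₁,…,A_{n-k+1}) of min_{B∈𝒰(A₁,…,A_{n-k+1})} φ(B), and also equals max over (n-k+1)-element subsets A⊆V of min_{∅≠B⊆A} φ(B). -/

import Mathlib

open Finset

variable {V : Type*}

noncomputable def bdryW [Fintype V] [DecidableEq V] (G : SimpleGraph V) [DecidableRel G.Adj]
    (w : Sym2 V → ℝ) (A : Finset V) : ℝ :=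
  ∑ u ∈ A, ∑ v ∈ Aᶜ, if G.Adj u v then w s(u, v) else 0

noncomputable def vol [Fintype V] (μ : V → ℝ) (A : Finset V) : ℝ := ∑ v ∈ A, μ v

noncomputable def phi [Fintype V] [DecidableEq V] (G : SimpleGraph V) [DecidableRel G.Adj]
    (μ : V → ℝ) (w : Sym2 V → ℝ) (A : Finset V) : ℝ := bdryW G w A / vol μ A

/-- A subpartition: a tuple of pairwise disjoint nonempty subsets of the vertex set. -/
def IsSubpartition {k : ℕ} (A : Fin k → Finset V) : Prop :=
  (∀ i, (A i).Nonempty) ∧ ∀ i j, i ≠ j → Disjoint (A i) (A j)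

/-- The Cheeger k-constant: min over subpartitions with k parts of the max expansion. -/
noncomputable def hkConst [Fintype V] [DecidableEq V] (G : SimpleGraph V) [DecidableRel G.Adj]
    (μ : V → ℝ) (w : Sym2 V → ℝ) (k : ℕ) : ℝ :=
  sInf {r | ∃ A : Fin k → Finset V, IsSubpartition A ∧
    r = sSup {s | ∃ i, s = phi G μ w (A i)}}

/-- Variant of the Cheeger k-constant where the maximum runs over all unions of parts. -/
noncomputable def hkUnion [Fintype V] [DecidableEq V] (G : SimpleGraph V) [DecidableRel G.Adj]
    (μ : V → ℝ) (w : Sym2 V → ℝ) (k : ℕ) : ℝ :=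
  sInf {r | ∃ A : Fin k → Finset V, IsSubpartition A ∧
    r = sSup {s | ∃ I : Finset (Fin k), I.Nonempty ∧ s = phi G μ w (I.biUnion A)}}

/-- The k-th max-min Cheeger constant ℓ_k. -/
noncomputable def ellk [Fintype V] [DecidableEq V] (G : SimpleGraph V) [DecidableRel G.Adj]
    (μ : V → ℝ) (w : Sym2 V → ℝ) (k : ℕ) : ℝ :=
  sSup {r | ∃ A : Fin (Fintype.card V - k + 1) → Finset V, IsSubpartition A ∧
    r = sInf {s | ∃ I : Finset (Fin (Fintype.card V - k + 1)), I.Nonempty ∧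
      s = phi G μ w (I.biUnion A)}}

/-- The Cheeger constant of a subset A: min of φ over nonempty subsets of A. -/
noncomputable def cheegerConst [Fintype V] [DecidableEq V] (G : SimpleGraph V) [DecidableRel G.Adj]
    (μ : V → ℝ) (w : Sym2 V → ℝ) (A : Finset V) : ℝ :=
  sInf {r | ∃ B : Finset V, B ⊆ A ∧ B.Nonempty ∧ r = phi G μ w B}

/-- The k-th Dirichlet Cheeger constant ℓ̲_k. -/
noncomputable def ellUnder [Fintype V] [DecidableEq V] (G : SimpleGraph V) [DecidableRel G.Adj]
    (μ : V → ℝ) (w : Sym2 V → ℝ) (k : ℕ) : ℝ :=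
  sSup {r | ∃ A : Finset V, A.card = Fintype.card V - k + 1 ∧ r = cheegerConst G μ w A}


set_option linter.unusedSectionVars false
set_option linter.unusedVariables false
set_option maxHeartbeats 1000000


/-- Spanning count for connected hypergraphs. -/
lemma lemmaH {ι κ : Type*} [DecidableEq ι] [DecidableEq κ] :
    ∀ (n : ℕ) (T : Finset ι) (P : Finset κ) (e : κ → Finset ι), T.card = n →
    (∀ j ∈ P, e j ⊆ T) → (∀ j ∈ P, (e j).Nonempty) →
    ∀ i₀ ∈ T, (∀ i ∈ T, Relation.ReflTransGen (fun a b => ∃ j ∈ P, a ∈ e j ∧ b ∈ e j) i₀ i) →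
    T.card + P.card ≤ 1 + ∑ j ∈ P, (e j).card := by
  intro n
  induction n using Nat.strong_induction_on with
  | _ n IH =>
  intro T P e hTn hsub hne i₀ h₀ hconn
  by_cases hT1 : T.card ≤ 1
  · have : P.card ≤ ∑ j ∈ P, (e j).card := by
      calc P.card = ∑ _j ∈ P, 1 := by simp
      _ ≤ _ := Finset.sum_le_sum (fun j hj => (hne j hj).card_pos)
    omega
  push_neg at hT1
  have hexj : ∃ js ∈ P, 2 ≤ (e js).card := by
    by_contra hno
    push_neg at hno
    have key : ∀ x y : ι, Relation.ReflTransGen (fun a b => ∃ j ∈ P, a ∈ e j ∧ b ∈ e j) x y →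
        x = y := by
      intro x y h
      induction h with
      | refl => rfl
      | tail _ hstep ih =>
        obtain ⟨j, hj, ha, hb⟩ := hstep
        exact ih.trans (Finset.card_le_one.mp (Nat.lt_succ_iff.mp (hno j hj)) _ ha _ hb)
    obtain ⟨i, hi, hii⟩ := Finset.exists_mem_ne hT1 i₀
    exact hii (key i₀ i (hconn i hi)).symm
  obtain ⟨js, hjs, hjs2⟩ := hexj
  obtain ⟨i₁, hi₁, i₂, hi₂, h12⟩ := Finset.one_lt_card.mp hjs2
  -- merge i₂ into i₁
  set σ : ι → ι := fun x => if x = i₂ then i₁ else x with hσ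
  set e' : κ → Finset ι := fun j => if i₂ ∈ e j then insert i₁ ((e j).erase i₂) else e j with he'
  set T' : Finset ι := T.erase i₂ with hT'
  have hi₁T : i₁ ∈ T := hsub js hjs hi₁
  have hi₂T : i₂ ∈ T := hsub js hjs hi₂
  have hi₁T' : i₁ ∈ T' := Finset.mem_erase.mpr ⟨h12, hi₁T⟩
  have hσmem : ∀ x ∈ T, σ x ∈ T' := by
    intro x hx
    by_cases hx2 : x = i₂
    · simpa [hσ, hx2] using hi₁T'
    · show (if x = i₂ then i₁ else x) ∈ T'
      rw [if_neg hx2]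
      exact Finset.mem_erase.mpr ⟨hx2, hx⟩
  have hσe : ∀ j ∈ P, ∀ x ∈ e j, σ x ∈ e' j := by
    intro j hj x hx
    by_cases hx2 : x = i₂
    · subst hx2
      simp [hσ, he', hx, Finset.mem_insert]
    · by_cases h2j : i₂ ∈ e j <;> simp [hσ, he', hx2, h2j, hx]
  have hsub' : ∀ j ∈ P, e' j ⊆ T' := by
    intro j hj x hx
    by_cases h2j : i₂ ∈ e j
    · simp only [he', h2j, if_true, Finset.mem_insert, Finset.mem_erase] at hx
      rcases hx with rfl | ⟨hx2, hxj⟩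
      · exact hi₁T'
      · exact Finset.mem_erase.mpr ⟨hx2, hsub j hj hxj⟩
    · simp only [he', h2j, if_false] at hx
      exact Finset.mem_erase.mpr ⟨fun h => h2j (h ▸ hx), hsub j hj hx⟩
  have hne' : ∀ j ∈ P, (e' j).Nonempty := by
    intro j hj
    by_cases h2j : i₂ ∈ e j <;> simp [he', h2j, hne j hj, Finset.insert_nonempty]
  have hσRTG : ∀ x y : ι, Relation.ReflTransGen (fun a b => ∃ j ∈ P, a ∈ e j ∧ b ∈ e j) x y →
      Relation.ReflTransGen (fun a b => ∃ j ∈ P, a ∈ e' j ∧ b ∈ e' j) (σ x) (σ y) := by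
    intro x y h
    induction h with
    | refl => exact Relation.ReflTransGen.refl
    | tail _ hstep ih =>
      obtain ⟨j, hj, ha, hb⟩ := hstep
      exact ih.tail ⟨j, hj, hσe j hj _ ha, hσe j hj _ hb⟩
  have hconn' : ∀ i ∈ T', Relation.ReflTransGen (fun a b => ∃ j ∈ P, a ∈ e' j ∧ b ∈ e' j) (σ i₀) i := by
    intro i hi
    have hiT : i ∈ T := Finset.mem_of_mem_erase hi
    have hne2 : i ≠ i₂ := (Finset.mem_erase.mp hi).1
    have := hσRTG i₀ i (hconn i hiT)
    simpa [hσ, hne2] using this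
  have hσ₀ : σ i₀ ∈ T' := hσmem i₀ h₀
  have hcardT' : T'.card = T.card - 1 := Finset.card_erase_of_mem hi₂T
  have hIH := IH (T.card - 1) (by omega) T' P e' (by omega) hsub' hne' (σ i₀) hσ₀ hconn'
  -- sum comparison
  have hsum : ∑ j ∈ P, (e' j).card + 1 ≤ ∑ j ∈ P, (e j).card := by
    have hlt : ∑ j ∈ P, (e' j).card < ∑ j ∈ P, (e j).card := by
      apply Finset.sum_lt_sum
      · intro j hj
        by_cases h2j : i₂ ∈ e j
        · simp only [he', h2j, if_true]
          calc (insert i₁ ((e j).erase i₂)).card ≤ ((e j).erase i₂).card + 1 :=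
                Finset.card_insert_le _ _
          _ = (e j).card - 1 + 1 := by rw [Finset.card_erase_of_mem h2j]
          _ ≤ (e j).card := by have := Finset.card_pos.mpr ⟨i₂, h2j⟩; omega
        · simp [he', h2j]
      · exact ⟨js, hjs, by
          simp only [he', hi₂, if_true]
          rw [Finset.card_insert_of_mem (Finset.mem_erase.mpr ⟨h12, hi₁⟩),
            Finset.card_erase_of_mem hi₂]
          omega⟩
    omega
  omega

/-- Main counting lemma: if no nonempty union of the `A` family equals a union of the `B`
family, and each family is pairwise disjoint with nonempty members, then
`|K| + |M| ≤ |⋃ A ∪ ⋃ B|`. -/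
lemma lemmaC {W : Type*} [DecidableEq W] {ι κ : Type*} [DecidableEq ι] [DecidableEq κ] :
    ∀ (n : ℕ) (K : Finset ι) (M : Finset κ) (A : ι → Finset W) (B : κ → Finset W),
    K.card = n →
    (∀ i ∈ K, (A i).Nonempty) →
    (∀ i ∈ K, ∀ i' ∈ K, i ≠ i' → Disjoint (A i) (A i')) →
    (∀ j ∈ M, (B j).Nonempty) →
    (∀ j ∈ M, ∀ j' ∈ M, j ≠ j' → Disjoint (B j) (B j')) →
    (∀ I ⊆ K, I.Nonempty → ∀ J ⊆ M, I.biUnion A ≠ J.biUnion B) →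
    K.card + M.card ≤ (K.biUnion A ∪ M.biUnion B).card := by
  intro n
  induction n using Nat.strong_induction_on with
  | _ n IH =>
  intro K M A B hKn hAne hAdisj hBne hBdisj hmain
  classical
  rcases K.eq_empty_or_nonempty with rfl | ⟨i₀, hi₀⟩
  · have h1 : M.biUnion B ⊆ (∅ : Finset ι).biUnion A ∪ M.biUnion B := Finset.subset_union_right
    have h2 : (M.biUnion B).card = ∑ j ∈ M, (B j).card :=
      Finset.card_biUnion (fun j hj j' hj' hne => hBdisj j hj j' hj' hne)
    have h3 : M.card ≤ ∑ j ∈ M, (B j).card := by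
      calc M.card = ∑ _j ∈ M, 1 := by simp
      _ ≤ _ := Finset.sum_le_sum (fun j hj => (hBne j hj).card_pos)
    have := Finset.card_le_card h1
    simp only [Finset.card_empty] at *
    omega
  · set rel : ι → ι → Prop := fun a b => a ∈ K ∧ b ∈ K ∧
      ∃ j ∈ M, (A a ∩ B j).Nonempty ∧ (A b ∩ B j).Nonempty with hrel
    set T : Finset ι := K.filter (fun i => Relation.ReflTransGen rel i₀ i) with hT
    have hi₀T : i₀ ∈ T := Finset.mem_filter.mpr ⟨hi₀, Relation.ReflTransGen.refl⟩
    have hTK : T ⊆ K := Finset.filter_subset _ _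
    have hclosure : ∀ i ∈ T, ∀ i', rel i i' → i' ∈ T := by
      intro i hi i' hrel'
      exact Finset.mem_filter.mpr ⟨hrel'.2.1, (Finset.mem_filter.mp hi).2.tail hrel'⟩
    set P : Finset κ := M.filter (fun j => (B j ∩ T.biUnion A).Nonempty) with hP
    have hPM : P ⊆ M := Finset.filter_subset _ _
    set e : κ → Finset ι := fun j => T.filter (fun i => (A i ∩ B j).Nonempty) with he
    have heT : ∀ j, e j ⊆ T := fun j => Finset.filter_subset _ _
    have hene : ∀ j ∈ P, (e j).Nonempty := by
      intro j hj
      obtain ⟨x, hx⟩ := (Finset.mem_filter.mp hj).2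
      obtain ⟨hxB, hxU⟩ := Finset.mem_inter.mp hx
      obtain ⟨i, hiT, hxA⟩ := Finset.mem_biUnion.mp hxU
      exact ⟨i, Finset.mem_filter.mpr ⟨hiT, ⟨x, Finset.mem_inter.mpr ⟨hxA, hxB⟩⟩⟩⟩
    -- the injection from e j into B j ∩ ⋃_T A
    have hecard : ∀ j ∈ P, (e j).card ≤ (B j ∩ T.biUnion A).card := by
      intro j hj
      set f : ι → W := fun i =>
        if h : (A i ∩ B j).Nonempty then h.choose else ((hBne j (hPM hj)).choose) with hf
      apply Finset.card_le_card_of_injOn f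
      · intro i hi
        have hh := (Finset.mem_filter.mp hi).2
        have hiT := (Finset.mem_filter.mp hi).1
        have hch := hh.choose_spec
        rw [Finset.mem_inter] at hch
        simp only [hf, dif_pos hh]
        exact Finset.mem_inter.mpr ⟨hch.2, Finset.mem_biUnion.mpr ⟨i, hiT, hch.1⟩⟩
      · intro a ha b hb hab
        by_contra hne2
        have hha := (Finset.mem_filter.mp ha).2
        have hhb := (Finset.mem_filter.mp hb).2
        have hcha := hha.choose_spec
        have hchb := hhb.choose_spec
        rw [Finset.mem_inter] at hcha hchb
        simp only [hf, dif_pos hha, dif_pos hhb] at hab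
        exact Finset.disjoint_left.mp
          (hAdisj a (hTK (Finset.mem_filter.mp ha).1) b (hTK (Finset.mem_filter.mp hb).1) hne2)
          hcha.1 (hab ▸ hchb.1)
    -- connectivity in the sense of lemmaH
    have hconnH : ∀ i ∈ T, Relation.ReflTransGen (fun a b => ∃ j ∈ P, a ∈ e j ∧ b ∈ e j) i₀ i := by
      intro i hi
      have hrtg := (Finset.mem_filter.mp hi).2
      clear hi
      induction hrtg with
      | refl => exact Relation.ReflTransGen.refl
      | @tail b c hab hstep ih =>
        obtain ⟨hbK, hcK, j, hjM, hbj, hcj⟩ := hstep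
        have hbT : b ∈ T := Finset.mem_filter.mpr ⟨hbK, hab⟩
        have hcT : c ∈ T := Finset.mem_filter.mpr ⟨hcK, hab.tail ⟨hbK, hcK, j, hjM, hbj, hcj⟩⟩
        have hjP : j ∈ P := by
          obtain ⟨x, hx⟩ := hbj
          rw [Finset.mem_inter] at hx
          exact Finset.mem_filter.mpr ⟨hjM, ⟨x, Finset.mem_inter.mpr
            ⟨hx.2, Finset.mem_biUnion.mpr ⟨b, hbT, hx.1⟩⟩⟩⟩
        exact ih.tail ⟨j, hjP, Finset.mem_filter.mpr ⟨hbT, hbj⟩, Finset.mem_filter.mpr ⟨hcT, hcj⟩⟩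
    have hH := lemmaH T.card T P e (rfl) (fun j _ => heT j) hene i₀ hi₀T hconnH
    -- the per-class bound
    set X : Finset W := T.biUnion A ∪ P.biUnion B with hX
    have hPBcard : (P.biUnion B).card = ∑ j ∈ P, (B j).card :=
      Finset.card_biUnion (fun j hj j' hj' hne2 => hBdisj j (hPM hj) j' (hPM hj') hne2)
    have hXbound : T.card + P.card ≤ X.card := by
      by_cases hcase : T.biUnion A ⊆ P.biUnion B
      · -- the class is inside the parts
        have hstick : ∃ js ∈ P, ∃ x ∈ B js, x ∉ T.biUnion A := by
          by_contra hall
          push_neg at hall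
          refine hmain T hTK ⟨i₀, hi₀T⟩ P hPM ?_
          apply Finset.Subset.antisymm hcase
          intro x hx
          obtain ⟨j, hjP, hxB⟩ := Finset.mem_biUnion.mp hx
          exact hall j hjP x hxB
        obtain ⟨js, hjsP, x, hxB, hxnA⟩ := hstick
        have hjs_lt : (e js).card < (B js).card := by
          have h1 : (B js ∩ T.biUnion A) ⊆ (B js).erase x := by
            intro y hy
            rw [Finset.mem_inter] at hy
            exact Finset.mem_erase.mpr ⟨fun h => hxnA (h ▸ hy.2), hy.1⟩
          calc (e js).card ≤ (B js ∩ T.biUnion A).card := hecard js hjsP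
          _ ≤ ((B js).erase x).card := Finset.card_le_card h1
          _ < (B js).card := by
            rw [Finset.card_erase_of_mem hxB]
            have := Finset.card_pos.mpr ⟨x, hxB⟩
            omega
        have hsum : ∑ j ∈ P, (e j).card < ∑ j ∈ P, (B j).card := by
          apply Finset.sum_lt_sum
          · intro j hj
            calc (e j).card ≤ (B j ∩ T.biUnion A).card := hecard j hj
            _ ≤ (B j).card := Finset.card_le_card Finset.inter_subset_left
          · exact ⟨js, hjsP, hjs_lt⟩
        have hXeq : X = P.biUnion B := by
          rw [hX, Finset.union_eq_right.mpr hcase]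
        rw [hXeq, hPBcard]
        omega
      · -- some vertex of the class sticks out of the parts
        obtain ⟨v, hvA, hvB⟩ : ∃ v ∈ T.biUnion A, v ∉ P.biUnion B := by
          by_contra hall
          push_neg at hall
          exact hcase hall
        have h1 : insert v (P.biUnion B) ⊆ X := by
          intro y hy
          rcases Finset.mem_insert.mp hy with rfl | hy2
          · exact Finset.mem_union_left _ hvA
          · exact Finset.mem_union_right _ hy2
        have h2 : (P.biUnion B).card + 1 ≤ X.card := by
          have := Finset.card_le_card h1
          rwa [Finset.card_insert_of_notMem hvB] at this
        have hsum : ∑ j ∈ P, (e j).card ≤ ∑ j ∈ P, (B j).card := by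
          apply Finset.sum_le_sum
          intro j hj
          calc (e j).card ≤ (B j ∩ T.biUnion A).card := hecard j hj
          _ ≤ (B j).card := Finset.card_le_card Finset.inter_subset_left
        rw [hPBcard] at h2
        omega
    -- recursion on the rest
    set K' : Finset ι := K \ T with hK'
    set M' : Finset κ := M \ P with hM'
    have hK'K : K' ⊆ K := Finset.sdiff_subset
    have hM'M : M' ⊆ M := Finset.sdiff_subset
    have hK'card : K'.card = K.card - T.card := Finset.card_sdiff_of_subset hTK
    have hM'card : M'.card = M.card - P.card := Finset.card_sdiff_of_subset hPM
    have hTpos : 0 < T.card := Finset.card_pos.mpr ⟨i₀, hi₀T⟩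
    have hK'lt : K'.card < n := by
      have h1 : K' ⊂ K := Finset.sdiff_ssubset hTK ⟨i₀, hi₀T⟩
      have := Finset.card_lt_card h1
      omega
    have hIH := IH K'.card hK'lt K' M' A B rfl
      (fun i hi => hAne i (hK'K hi))
      (fun i hi i' hi' h2 => hAdisj i (hK'K hi) i' (hK'K hi') h2)
      (fun j hj => hBne j (hM'M hj))
      (fun j hj j' hj' h2 => hBdisj j (hM'M hj) j' (hM'M hj') h2)
      (fun I hI hIne J hJ => hmain I (hI.trans hK'K) hIne J (hJ.trans hM'M))
    -- disjointness of X from the rest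
    have hdisjX : Disjoint X (K'.biUnion A ∪ M'.biUnion B) := by
      rw [Finset.disjoint_left]
      intro y hyX hyR
      rcases Finset.mem_union.mp hyR with hyR | hyR
      · obtain ⟨i', hi'K', hyA'⟩ := Finset.mem_biUnion.mp hyR
        have hi'K := hK'K hi'K'
        have hi'nT : i' ∉ T := (Finset.mem_sdiff.mp hi'K').2
        rcases Finset.mem_union.mp hyX with hyT | hyP
        · obtain ⟨i, hiT, hyA⟩ := Finset.mem_biUnion.mp hyT
          have : i ≠ i' := fun h => hi'nT (h ▸ hiT)
          exact Finset.disjoint_left.mp (hAdisj i (hTK hiT) i' hi'K this) hyA hyA'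
        · obtain ⟨j, hjP, hyB⟩ := Finset.mem_biUnion.mp hyP
          -- j meets T; together with A i' this gives rel, so i' ∈ T
          obtain ⟨z, hz⟩ := (Finset.mem_filter.mp hjP).2
          rw [Finset.mem_inter] at hz
          obtain ⟨i, hiT, hzA⟩ := Finset.mem_biUnion.mp hz.2
          apply hi'nT
          exact hclosure i hiT i' ⟨hTK hiT, hi'K, j, hPM hjP,
            ⟨z, Finset.mem_inter.mpr ⟨hzA, hz.1⟩⟩, ⟨y, Finset.mem_inter.mpr ⟨hyA', hyB⟩⟩⟩
      · obtain ⟨j', hj'M', hyB'⟩ := Finset.mem_biUnion.mp hyR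
        have hj'M := hM'M hj'M'
        have hj'nP : j' ∉ P := (Finset.mem_sdiff.mp hj'M').2
        rcases Finset.mem_union.mp hyX with hyT | hyP
        · apply hj'nP
          exact Finset.mem_filter.mpr ⟨hj'M, ⟨y, Finset.mem_inter.mpr ⟨hyB', hyT⟩⟩⟩
        · obtain ⟨j, hjP, hyB⟩ := Finset.mem_biUnion.mp hyP
          have : j ≠ j' := fun h => hj'nP (h ▸ hjP)
          exact Finset.disjoint_left.mp (hBdisj j (hPM hjP) j' hj'M this) hyB hyB'
    have hsubfull : X ∪ (K'.biUnion A ∪ M'.biUnion B) ⊆ K.biUnion A ∪ M.biUnion B := by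
      intro y hy
      rcases Finset.mem_union.mp hy with hy | hy
      · rcases Finset.mem_union.mp hy with hy | hy
        · exact Finset.mem_union_left _ (Finset.biUnion_subset_biUnion_of_subset_left A hTK hy)
        · exact Finset.mem_union_right _ (Finset.biUnion_subset_biUnion_of_subset_left B hPM hy)
      · rcases Finset.mem_union.mp hy with hy | hy
        · exact Finset.mem_union_left _ (Finset.biUnion_subset_biUnion_of_subset_left A hK'K hy)
        · exact Finset.mem_union_right _ (Finset.biUnion_subset_biUnion_of_subset_left B hM'M hy)
    have hcards : X.card + (K'.biUnion A ∪ M'.biUnion B).card ≤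
        (K.biUnion A ∪ M.biUnion B).card := by
      rw [← Finset.card_union_of_disjoint hdisjX]
      exact Finset.card_le_card hsubfull
    have hPcard_le : P.card ≤ M.card := Finset.card_le_card hPM
    have hTcard_le : T.card ≤ K.card := Finset.card_le_card hTK
    have hsplit : K.card + M.card = T.card + P.card + (K'.card + M'.card) := by omega
    calc K.card + M.card = (T.card + P.card) + (K'.card + M'.card) := hsplit
    _ ≤ X.card + (K'.biUnion A ∪ M'.biUnion B).card := Nat.add_le_add hXbound hIH
    _ ≤ (K.biUnion A ∪ M.biUnion B).card := hcards


section Basics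
variable [Fintype V] [DecidableEq V] (G : SimpleGraph V) [DecidableRel G.Adj]
    (μ : V → ℝ) (w : Sym2 V → ℝ)

lemma wterm_nonneg (hw : ∀ e ∈ G.edgeSet, 0 < w e) (u v : V) :
    0 ≤ if G.Adj u v then w s(u, v) else 0 := by
  split_ifs with h
  · exact le_of_lt (hw _ (G.mem_edgeSet.mpr h))
  · exact le_refl 0

lemma bdryW_nonneg (hw : ∀ e ∈ G.edgeSet, 0 < w e) (A : Finset V) : 0 ≤ bdryW G w A :=
  Finset.sum_nonneg fun u _ => Finset.sum_nonneg fun v _ => wterm_nonneg G w hw u v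

lemma vol_pos (hμ : ∀ v, 0 < μ v) {A : Finset V} (hA : A.Nonempty) : 0 < vol μ A :=
  Finset.sum_pos (fun v _ => hμ v) hA

lemma vol_union {A B : Finset V} (h : Disjoint A B) :
    vol μ (A ∪ B) = vol μ A + vol μ B := Finset.sum_union h

lemma bdryW_union_le (hw : ∀ e ∈ G.edgeSet, 0 < w e) {A B : Finset V} (h : Disjoint A B) :
    bdryW G w (A ∪ B) ≤ bdryW G w A + bdryW G w B := by
  unfold bdryW
  rw [Finset.sum_union h]
  apply add_le_add
  · apply Finset.sum_le_sum
    intro u _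
    apply Finset.sum_le_sum_of_subset_of_nonneg
    · intro v hv
      simp only [Finset.mem_compl, Finset.mem_union] at *
      exact fun hvA => hv (Or.inl hvA)
    · intro v _ _; exact wterm_nonneg G w hw u v
  · apply Finset.sum_le_sum
    intro u _
    apply Finset.sum_le_sum_of_subset_of_nonneg
    · intro v hv
      simp only [Finset.mem_compl, Finset.mem_union] at *
      exact fun hvB => hv (Or.inr hvB)
    · intro v _ _; exact wterm_nonneg G w hw u v

lemma vol_biUnion {ι : Type*} [DecidableEq ι] {I : Finset ι} {A : ι → Finset V}
    (h : ∀ i ∈ I, ∀ j ∈ I, i ≠ j → Disjoint (A i) (A j)) :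
    vol μ (I.biUnion A) = ∑ i ∈ I, vol μ (A i) := by
  unfold vol
  rw [Finset.sum_biUnion]
  exact fun i hi j hj hij => h i hi j hj hij

lemma bdryW_biUnion_le (hw : ∀ e ∈ G.edgeSet, 0 < w e) {ι : Type*} [DecidableEq ι]
    {I : Finset ι} {A : ι → Finset V}
    (h : ∀ i ∈ I, ∀ j ∈ I, i ≠ j → Disjoint (A i) (A j)) :
    bdryW G w (I.biUnion A) ≤ ∑ i ∈ I, bdryW G w (A i) := by
  classical
  induction I using Finset.induction with
  | empty => simp [bdryW]
  | @insert i I hiI ih =>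
    rw [Finset.biUnion_insert, Finset.sum_insert hiI]
    have hdisj : Disjoint (A i) (I.biUnion A) := by
      rw [Finset.disjoint_biUnion_right]
      intro j hj
      exact h i (Finset.mem_insert_self i I) j (Finset.mem_insert_of_mem hj)
        (fun hij => hiI (hij ▸ hj))
    calc bdryW G w (A i ∪ I.biUnion A) ≤ bdryW G w (A i) + bdryW G w (I.biUnion A) :=
          bdryW_union_le G w hw hdisj
    _ ≤ bdryW G w (A i) + ∑ j ∈ I, bdryW G w (A j) := by
        apply add_le_add le_rfl
        exact ih (fun a ha b hb hab =>
          h a (Finset.mem_insert_of_mem ha) b (Finset.mem_insert_of_mem hb) hab)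

/-- The boundary weight splits additively when there are no edges between the two halves. -/
lemma bdryW_split (hw : ∀ e ∈ G.edgeSet, 0 < w e) {A B : Finset V} (h : Disjoint A B)
    (hno : ∀ u ∈ A, ∀ v ∈ B, ¬ G.Adj u v) :
    bdryW G w (A ∪ B) = bdryW G w A + bdryW G w B := by
  unfold bdryW
  rw [Finset.sum_union h]
  congr 1
  · apply Finset.sum_congr rfl
    intro u hu
    have hAc : Aᶜ = (A ∪ B)ᶜ ∪ B := by
      ext v
      simp only [Finset.mem_compl, Finset.mem_union]
      constructor
      · intro hv
        by_cases hvB : v ∈ B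
        · exact Or.inr hvB
        · exact Or.inl (fun hv2 => hv2.elim hv hvB)
      · rintro (hv | hv)
        · exact fun hvA => hv (Or.inl hvA)
        · exact fun hvA => Finset.disjoint_left.mp h hvA hv
    rw [hAc, Finset.sum_union]
    · have : ∑ v ∈ B, (if G.Adj u v then w s(u, v) else 0) = 0 := by
        apply Finset.sum_eq_zero
        intro v hv
        rw [if_neg (hno u hu v hv)]
      rw [this, add_zero]
    · rw [Finset.disjoint_right]
      intro v hv
      simp only [Finset.mem_compl, Finset.mem_union]
      exact fun hc => hc (Or.inr hv)
  · apply Finset.sum_congr rfl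
    intro u hu
    have hBc : Bᶜ = (A ∪ B)ᶜ ∪ A := by
      ext v
      simp only [Finset.mem_compl, Finset.mem_union]
      constructor
      · intro hv
        by_cases hvA : v ∈ A
        · exact Or.inr hvA
        · exact Or.inl (fun hv2 => hv2.elim hvA hv)
      · rintro (hv | hv)
        · exact fun hvB => hv (Or.inr hvB)
        · exact fun hvB => Finset.disjoint_left.mp h hv hvB
    rw [hBc, Finset.sum_union]
    · have : ∑ v ∈ A, (if G.Adj u v then w s(u, v) else 0) = 0 := by
        apply Finset.sum_eq_zero
        intro v hv
        rw [if_neg (fun hadj => hno v hv u hu hadj.symm)]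
      rw [this, add_zero]
    · rw [Finset.disjoint_right]
      intro v hv
      simp only [Finset.mem_compl, Finset.mem_union]
      exact fun hc => hc (Or.inl hv)

end Basics
/-- `X` is connected (as a subset of the graph `G`): any two of its vertices are joined
by a path inside `X`. -/
def conn (G : SimpleGraph V) (X : Finset V) : Prop :=
  ∀ x ∈ X, ∀ y ∈ X, Relation.ReflTransGen (fun u v => G.Adj u v ∧ u ∈ X ∧ v ∈ X) x y



section ConnLemmas
variable [Fintype V] [DecidableEq V] (G : SimpleGraph V) [DecidableRel G.Adj]
    (μ : V → ℝ) (w : Sym2 V → ℝ)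

lemma exists_split {X : Finset V} (hnc : ¬ conn G X) :
    ∃ X₁ X₂ : Finset V, X = X₁ ∪ X₂ ∧ Disjoint X₁ X₂ ∧ X₁.Nonempty ∧ X₂.Nonempty ∧
      (∀ u ∈ X₁, ∀ v ∈ X₂, ¬ G.Adj u v) := by
  classical
  unfold conn at hnc
  push_neg at hnc
  obtain ⟨x, hx, y, hy, hxy⟩ := hnc
  set relX : V → V → Prop := fun u v => G.Adj u v ∧ u ∈ X ∧ v ∈ X with hrelX
  set X₁ : Finset V := X.filter (fun z => Relation.ReflTransGen relX x z) with hX₁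
  set X₂ : Finset V := X \ X₁ with hX₂
  have hX₁X : X₁ ⊆ X := Finset.filter_subset _ _
  refine ⟨X₁, X₂, ?_, Finset.disjoint_sdiff, ⟨x, Finset.mem_filter.mpr ⟨hx, .refl⟩⟩,
    ⟨y, Finset.mem_sdiff.mpr ⟨hy, fun hc => hxy (Finset.mem_filter.mp hc).2⟩⟩, ?_⟩
  · rw [Finset.union_sdiff_of_subset hX₁X]
  · intro u hu v hv hadj
    have huX := hX₁X hu
    have hvX := (Finset.mem_sdiff.mp hv).1
    apply (Finset.mem_sdiff.mp hv).2
    exact Finset.mem_filter.mpr ⟨hvX, (Finset.mem_filter.mp hu).2.tail ⟨hadj, huX, hvX⟩⟩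

/-- Every "bad" set contains a connected bad subset. -/
lemma exists_conn_bad (hw : ∀ e ∈ G.edgeSet, 0 < w e) (hμ : ∀ v, 0 < μ v) (c : ℝ) :
    ∀ (n : ℕ) (X : Finset V), X.card = n → X.Nonempty → bdryW G w X < c * vol μ X →
    ∃ B, B ⊆ X ∧ B.Nonempty ∧ conn G B ∧ bdryW G w B < c * vol μ B := by
  intro n
  induction n using Nat.strong_induction_on with
  | _ n IH =>
  intro X hXn hXne hXbad
  by_cases hc : conn G X
  · exact ⟨X, Finset.Subset.refl X, hXne, hc, hXbad⟩
  · obtain ⟨X₁, X₂, hXeq, hdisj, hne₁, hne₂, hnoedge⟩ := exists_split G hc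
    have hb : bdryW G w X = bdryW G w X₁ + bdryW G w X₂ := by
      rw [hXeq]; exact bdryW_split G w hw hdisj hnoedge
    have hv : vol μ X = vol μ X₁ + vol μ X₂ := by
      rw [hXeq]; exact vol_union μ hdisj
    have hcard : X₁.card + X₂.card = n := by
      rw [← hXn, hXeq, Finset.card_union_of_disjoint hdisj]
    have hcard₁ : X₁.card < n := by
      have := Finset.card_pos.mpr hne₂; omega
    have hcard₂ : X₂.card < n := by
      have := Finset.card_pos.mpr hne₁; omega
    have hbad : bdryW G w X₁ < c * vol μ X₁ ∨ bdryW G w X₂ < c * vol μ X₂ := by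
      by_contra hcon
      push_neg at hcon
      rw [hb, hv, mul_add] at hXbad
      linarith [hcon.1, hcon.2]
    rcases hbad with h | h
    · obtain ⟨B, hB1, hB2, hB3, hB4⟩ := IH X₁.card hcard₁ X₁ rfl hne₁ h
      exact ⟨B, hB1.trans (hXeq ▸ Finset.subset_union_left), hB2, hB3, hB4⟩
    · obtain ⟨B, hB1, hB2, hB3, hB4⟩ := IH X₂.card hcard₂ X₂ rfl hne₂ h
      exact ⟨B, hB1.trans (hXeq ▸ Finset.subset_union_right), hB2, hB3, hB4⟩

end ConnLemmas

/-- In a finite acyclic graph, every nonempty vertex set contains a vertex with at most one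
neighbour inside the set. -/
lemma exists_leaf [Fintype V] [DecidableEq V] (G : SimpleGraph V) [DecidableRel G.Adj]
    (hG : G.IsAcyclic) {U : Finset V} (hU : U.Nonempty) :
    ∃ u ∈ U, (U.filter (fun v => G.Adj u v)).card ≤ 1 := by
  classical
  by_contra hall
  push_neg at hall
  -- longest path within U
  set S : Set ℕ := {n | ∃ (x : V) (y : V) (p : G.Walk x y), p.IsPath ∧
    (∀ z ∈ p.support, z ∈ U) ∧ p.length = n} with hS
  obtain ⟨u₀, hu₀⟩ := hU
  have hSne : S.Nonempty := ⟨0, u₀, u₀, SimpleGraph.Walk.nil, SimpleGraph.Walk.IsPath.nil,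
    by intro z hz; simp at hz; exact hz ▸ hu₀, rfl⟩
  have hSbdd : BddAbove S := by
    refine ⟨Fintype.card V, ?_⟩
    rintro n ⟨x, y, p, hp, _, rfl⟩
    exact le_of_lt hp.length_lt
  have hN := Nat.sSup_mem hSne hSbdd
  obtain ⟨x, y, p, hp, hsupp, hlen⟩ := hN
  have hyU : y ∈ U := hsupp y p.end_mem_support
  have hdeg := hall y hyU
  -- every U-neighbour of y lies on p, else we could extend the path
  have hnbr_in : ∀ a ∈ U, G.Adj y a → a ∈ p.support := by
    intro a haU hadj
    by_contra hans
    have hprev : a ∉ p.reverse.support := by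
      rwa [SimpleGraph.Walk.support_reverse, List.mem_reverse]
    have hp' : (SimpleGraph.Walk.cons hadj.symm p.reverse).IsPath :=
      (SimpleGraph.Walk.cons_isPath_iff _ _).mpr ⟨hp.reverse, hprev⟩
    have hmem : (SimpleGraph.Walk.cons hadj.symm p.reverse).length ∈ S := by
      refine ⟨a, x, _, hp', ?_, rfl⟩
      intro z hz
      rw [SimpleGraph.Walk.support_cons] at hz
      rcases List.mem_cons.mp hz with rfl | hz
      · exact haU
      · rw [SimpleGraph.Walk.support_reverse, List.mem_reverse] at hz
        exact hsupp z hz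
    have := le_csSup hSbdd hmem
    simp only [SimpleGraph.Walk.length_cons, SimpleGraph.Walk.length_reverse, hlen] at this
    omega
  -- y has two distinct U-neighbours
  obtain ⟨a₁, ha₁, a₂, ha₂, ha12⟩ := Finset.one_lt_card.mp hdeg
  rw [Finset.mem_filter] at ha₁ ha₂
  -- x ≠ y, so p starts (from the y side) with an edge y–z
  have hxy : x ≠ y := by
    rintro rfl
    have := (SimpleGraph.Walk.isPath_iff_eq_nil (p := p)).mp hp
    subst this
    have := hnbr_in a₁ ha₁.1 ha₁.2
    simp only [SimpleGraph.Walk.support_nil, List.mem_singleton] at this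
    exact G.ne_of_adj ha₁.2 this.symm
  obtain ⟨z, h', q, hq⟩ := SimpleGraph.Walk.exists_eq_cons_of_ne (Ne.symm hxy) p.reverse
  have hpr : p.reverse.IsPath := hp.reverse
  rw [hq, SimpleGraph.Walk.cons_isPath_iff] at hpr
  obtain ⟨hqpath, hynq⟩ := hpr
  -- pick a neighbour a of y with a ≠ z
  have hkey : ∀ a, a ∈ U → G.Adj y a → a ≠ z → False := by
    intro a haU hadj haz
    have haP : a ∈ p.support := hnbr_in a haU hadj
    have haq : a ∈ q.support := by
      have : a ∈ p.reverse.support := by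
        rwa [SimpleGraph.Walk.support_reverse, List.mem_reverse]
      rw [hq, SimpleGraph.Walk.support_cons] at this
      rcases List.mem_cons.mp this with rfl | h2
      · exact absurd rfl (G.ne_of_adj hadj)
      · exact h2
    set qa := q.takeUntil a haq with hqa
    have hqa_path : qa.IsPath := hqpath.takeUntil haq
    have hy_nqa : y ∉ qa.support := fun hc => hynq (q.support_takeUntil_subset haq hc)
    have hP : (SimpleGraph.Walk.cons h' qa).IsPath :=
      (SimpleGraph.Walk.cons_isPath_iff _ _).mpr ⟨hqa_path, hy_nqa⟩
    have hcyc : (SimpleGraph.Walk.cons hadj.symm (SimpleGraph.Walk.cons h' qa)).IsCycle := by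
      rw [SimpleGraph.Walk.cons_isCycle_iff]
      refine ⟨hP, ?_⟩
      rw [SimpleGraph.Walk.edges_cons]
      intro hc
      rcases List.mem_cons.mp hc with hc | hc
      · rw [Sym2.eq_iff] at hc
        rcases hc with ⟨h1, h2⟩ | ⟨h1, h2⟩
        · exact G.ne_of_adj hadj h1.symm
        · exact haz h1
      · have : y ∈ qa.support := by
          have : s(y, a) ∈ qa.edges := by rwa [Sym2.eq_swap] at hc
          exact qa.fst_mem_support_of_mem_edges this
        exact hy_nqa this
    exact hG _ hcyc
  by_cases h1z : a₁ = z
  · exact hkey a₂ ha₂.1 ha₂.2 (fun h => ha12 (h1z ▸ h ▸ rfl))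
  · exact hkey a₁ ha₁.1 ha₁.2 h1z
section HellyPart
variable [Fintype V] [DecidableEq V] (G : SimpleGraph V) [DecidableRel G.Adj]

/-- Removing a leaf (≤ 1 neighbour in `U ⊇ T`) keeps a connected set connected. -/
lemma conn_erase {U T : Finset V} (u : V) (hTU : T ⊆ U)
    (hleaf : (U.filter (fun v => G.Adj u v)).card ≤ 1) (hconn : conn G T) :
    conn G (T.erase u) := by
  intro x hx y hy
  have hxT := Finset.mem_of_mem_erase hx
  have hyT := Finset.mem_of_mem_erase hy
  have hxu := (Finset.mem_erase.mp hx).1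
  have hyu := (Finset.mem_erase.mp hy).1
  have hR := hconn x hxT y hyT
  set rel' : V → V → Prop := fun a b => G.Adj a b ∧ a ∈ T.erase u ∧ b ∈ T.erase u with hrel'
  have key : ∀ z, Relation.ReflTransGen (fun a b => G.Adj a b ∧ a ∈ T ∧ b ∈ T) x z →
      (z ≠ u → Relation.ReflTransGen rel' x z) ∧
      (z = u → ∃ a, Relation.ReflTransGen rel' x a ∧ a ∈ T.erase u ∧ G.Adj a u) := by
    intro z hz
    induction hz with
    | refl => exact ⟨fun _ => .refl, fun h => absurd h hxu⟩
    | @tail b c hxb hbc ih =>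
      obtain ⟨hadj, hbT, hcT⟩ := hbc
      by_cases hbu : b = u
      · subst hbu
        obtain ⟨a, haR, haM, haA⟩ := ih.2 rfl
        have hac : a = c := by
          have h1 : a ∈ U.filter (fun v => G.Adj b v) :=
            Finset.mem_filter.mpr ⟨hTU (Finset.mem_of_mem_erase haM), haA.symm⟩
          have h2 : c ∈ U.filter (fun v => G.Adj b v) :=
            Finset.mem_filter.mpr ⟨hTU hcT, hadj⟩
          exact Finset.card_le_one.mp hleaf a h1 c h2
        subst hac
        refine ⟨fun _ => haR, fun hcu => absurd hcu (Finset.mem_erase.mp haM).1⟩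
      · have hbR := ih.1 hbu
        by_cases hcu : c = u
        · subst hcu
          exact ⟨fun h => absurd rfl h,
            fun _ => ⟨b, hbR, Finset.mem_erase.mpr ⟨hbu, hbT⟩, hadj⟩⟩
        · exact ⟨fun _ => hbR.tail ⟨hadj, Finset.mem_erase.mpr ⟨hbu, hbT⟩,
            Finset.mem_erase.mpr ⟨hcu, hcT⟩⟩, fun h => absurd h hcu⟩
  exact (key y hR).1 hyu

/-- A connected set containing `u` and another vertex contains a neighbour of `u`. -/
lemma conn_nbr {T : Finset V} (hconn : conn G T) {u b : V} (hu : u ∈ T) (hb : b ∈ T)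
    (hub : u ≠ b) : ∃ c ∈ T, G.Adj u c := by
  have := hconn u hu b hb
  rcases Relation.ReflTransGen.cases_head this with h | ⟨c, ⟨hadj, _, hcT⟩, _⟩
  · exact absurd h hub
  · exact ⟨c, hcT, hadj⟩

/-- Packing–covering duality for families of connected subsets of a forest. -/
lemma helly (hG : G.IsAcyclic) :
    ∀ (n : ℕ) (U : Finset V) (F : Set (Finset V)) (p : ℕ), U.card = n →
    (∀ T ∈ F, T ⊆ U ∧ T.Nonempty ∧ conn G T) →
    (∀ P : Finset (Finset V), (↑P : Set (Finset V)) ⊆ F →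
      (∀ T₁ ∈ P, ∀ T₂ ∈ P, T₁ ≠ T₂ → Disjoint T₁ T₂) → P.card ≤ p) →
    ∃ W : Finset V, W.card ≤ p ∧ ∀ T ∈ F, (T ∩ W).Nonempty := by
  intro n
  induction n using Nat.strong_induction_on with
  | _ n IH =>
  intro U F p hUn hF hpack
  classical
  rcases U.eq_empty_or_nonempty with rfl | hUne
  · refine ⟨∅, Nat.zero_le p, ?_⟩
    intro T hT
    obtain ⟨hTU, hTne, _⟩ := hF T hT
    obtain ⟨x, hx⟩ := hTne
    exact absurd (hTU hx) (Finset.notMem_empty x)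
  obtain ⟨u, huU, hleaf⟩ := exists_leaf G hG hUne
  have hUcard : (U.erase u).card < n := by
    rw [Finset.card_erase_of_mem huU]
    have := Finset.card_pos.mpr hUne
    omega
  by_cases hsing : ({u} : Finset V) ∈ F
  · -- case A : the singleton {u} is in the family
    set F' : Set (Finset V) := {T ∈ F | u ∉ T} with hF'
    have hF'mem : ∀ T ∈ F', T ⊆ U.erase u ∧ T.Nonempty ∧ conn G T := by
      intro T hT
      obtain ⟨hTF, hTu⟩ := hT
      obtain ⟨hTU, hTne, hTc⟩ := hF T hTF
      exact ⟨fun x hx => Finset.mem_erase.mpr ⟨fun h => hTu (h ▸ hx), hTU hx⟩, hTne, hTc⟩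
    have hppos : 1 ≤ p := by
      have := hpack {({u} : Finset V)} (by simpa using hsing) (by
        intro T₁ h₁ T₂ h₂ h12
        simp only [Finset.mem_singleton] at h₁ h₂
        exact absurd (h₁.trans h₂.symm) h12)
      simpa using this
    have hpack' : ∀ P : Finset (Finset V), (↑P : Set (Finset V)) ⊆ F' →
        (∀ T₁ ∈ P, ∀ T₂ ∈ P, T₁ ≠ T₂ → Disjoint T₁ T₂) → P.card ≤ p - 1 := by
      intro P hPF hPdisj
      have husP : ({u} : Finset V) ∉ P := by
        intro hc
        exact (hPF hc).2 (Finset.mem_singleton_self u)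
      have := hpack (insert {u} P) (by
        intro T hT
        rcases Finset.mem_insert.mp hT with rfl | hT
        · exact hsing
        · exact (hPF hT).1) (by
        intro T₁ h₁ T₂ h₂ h12
        rcases Finset.mem_insert.mp h₁ with rfl | h₁ <;> rcases Finset.mem_insert.mp h₂ with rfl | h₂
        · exact absurd rfl h12
        · exact Finset.disjoint_singleton_left.mpr (hPF h₂).2
        · exact Finset.disjoint_singleton_right.mpr (hPF h₁).2
        · exact hPdisj T₁ h₁ T₂ h₂ h12)
      rw [Finset.card_insert_of_notMem husP] at this
      omega
    obtain ⟨W', hW'card, hW'hit⟩ := IH (U.erase u).card hUcard (U.erase u) F' (p - 1)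
      rfl hF'mem hpack'
    refine ⟨insert u W', ?_, ?_⟩
    · calc (insert u W').card ≤ W'.card + 1 := Finset.card_insert_le _ _
      _ ≤ p := by omega
    · intro T hT
      by_cases hu : u ∈ T
      · exact ⟨u, Finset.mem_inter.mpr ⟨hu, Finset.mem_insert_self u W'⟩⟩
      · obtain ⟨x, hx⟩ := hW'hit T ⟨hT, hu⟩
        rw [Finset.mem_inter] at hx
        exact ⟨x, Finset.mem_inter.mpr ⟨hx.1, Finset.mem_insert_of_mem hx.2⟩⟩
  · -- case B : erase u from every member
    set F' : Set (Finset V) := (fun T => T.erase u) '' F with hF'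
    have hne' : ∀ T ∈ F, (T.erase u).Nonempty := by
      intro T hT
      obtain ⟨hTU, hTne, hTc⟩ := hF T hT
      rcases Finset.eq_empty_or_nonempty (T.erase u) with he | h
      · exfalso
        apply hsing
        have : T = {u} := by
          obtain ⟨x, hx⟩ := hTne
          have hxu : x = u := by
            by_contra hxu
            exact Finset.notMem_empty x (he ▸ Finset.mem_erase.mpr ⟨hxu, hx⟩)
          apply Finset.Subset.antisymm
          · intro y hy
            by_contra hyu
            simp only [Finset.mem_singleton] at hyu
            exact Finset.notMem_empty y (he ▸ Finset.mem_erase.mpr ⟨hyu, hy⟩)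
          · simpa [hxu] using Finset.singleton_subset_iff.mpr hx
        exact this ▸ hT
      · exact h
    have hF'mem : ∀ T' ∈ F', T' ⊆ U.erase u ∧ T'.Nonempty ∧ conn G T' := by
      rintro T' ⟨T, hT, rfl⟩
      obtain ⟨hTU, hTne, hTc⟩ := hF T hT
      refine ⟨fun x hx => Finset.mem_erase.mpr
        ⟨(Finset.mem_erase.mp hx).1, hTU (Finset.mem_of_mem_erase hx)⟩,
        hne' T hT, conn_erase G u hTU hleaf hTc⟩
    have hpack' : ∀ P : Finset (Finset V), (↑P : Set (Finset V)) ⊆ F' →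
        (∀ T₁ ∈ P, ∀ T₂ ∈ P, T₁ ≠ T₂ → Disjoint T₁ T₂) → P.card ≤ p := by
      intro P hPF hPdisj
      -- choose preimages
      have hexg : ∀ T' ∈ P, ∃ T, T ∈ F ∧ T.erase u = T' := by
        intro T' hT'
        obtain ⟨T, hT, he⟩ := hPF hT'
        exact ⟨T, hT, he⟩
      set g : Finset V → Finset V := fun T' =>
        if h : ∃ T, T ∈ F ∧ T.erase u = T' then h.choose else T' with hg
      have hgspec : ∀ T' ∈ P, g T' ∈ F ∧ (g T').erase u = T' := by
        intro T' hT'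
        have h := hexg T' hT'
        simp only [hg, dif_pos h]
        exact h.choose_spec
      have hginj : ∀ T₁ ∈ P, ∀ T₂ ∈ P, g T₁ = g T₂ → T₁ = T₂ := by
        intro T₁ h₁ T₂ h₂ he
        rw [← (hgspec T₁ h₁).2, ← (hgspec T₂ h₂).2, he]
      have := hpack (P.image g) (by
        rintro T hT
        simp only [Finset.coe_image, Set.mem_image, Finset.mem_coe] at hT
        obtain ⟨T', hT', rfl⟩ := hT
        exact (hgspec T' hT').1) (by
        intro T₁ h₁ T₂ h₂ h12
        obtain ⟨T₁', hT₁', rfl⟩ := Finset.mem_image.mp h₁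
        obtain ⟨T₂', hT₂', rfl⟩ := Finset.mem_image.mp h₂
        have hne12 : T₁' ≠ T₂' := fun h => h12 (h ▸ rfl)
        have hdisj' := hPdisj T₁' hT₁' T₂' hT₂' hne12
        rw [Finset.disjoint_left]
        intro y hy1 hy2
        by_cases hyu : y = u
        · -- both preimages contain u, hence both contain the unique U-neighbour of u
          rw [hyu] at hy1 hy2
          obtain ⟨hgF₁, hge₁⟩ := hgspec T₁' hT₁'
          obtain ⟨hgF₂, hge₂⟩ := hgspec T₂' hT₂'
          obtain ⟨hTU₁, hTne₁, hTc₁⟩ := hF _ hgF₁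
          obtain ⟨hTU₂, hTne₂, hTc₂⟩ := hF _ hgF₂
          obtain ⟨b₁, hb₁⟩ := hne' _ hgF₁
          obtain ⟨b₂, hb₂⟩ := hne' _ hgF₂
          obtain ⟨c₁, hc₁T, hc₁A⟩ := conn_nbr G hTc₁ hy1 (Finset.mem_of_mem_erase hb₁)
            (fun h => (Finset.mem_erase.mp hb₁).1 h.symm)
          obtain ⟨c₂, hc₂T, hc₂A⟩ := conn_nbr G hTc₂ hy2 (Finset.mem_of_mem_erase hb₂)
            (fun h => (Finset.mem_erase.mp hb₂).1 h.symm)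
          have hc12 : c₁ = c₂ := by
            have h1 : c₁ ∈ U.filter (fun v => G.Adj u v) :=
              Finset.mem_filter.mpr ⟨hTU₁ hc₁T, hc₁A⟩
            have h2 : c₂ ∈ U.filter (fun v => G.Adj u v) :=
              Finset.mem_filter.mpr ⟨hTU₂ hc₂T, hc₂A⟩
            exact Finset.card_le_one.mp hleaf c₁ h1 c₂ h2
          have hm1 : c₁ ∈ T₁' := hge₁ ▸ Finset.mem_erase.mpr ⟨G.ne_of_adj hc₁A |>.symm
            |> fun h => h, hc₁T⟩
          have hm2 : c₁ ∈ T₂' := by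
            rw [← hge₂, hc12]
            exact Finset.mem_erase.mpr ⟨fun h => G.ne_of_adj hc₂A h.symm, hc₂T⟩
          exact Finset.disjoint_left.mp hdisj' hm1 hm2
        · have hm1 : y ∈ T₁' := (hgspec T₁' hT₁').2 ▸ Finset.mem_erase.mpr ⟨hyu, hy1⟩
          have hm2 : y ∈ T₂' := (hgspec T₂' hT₂').2 ▸ Finset.mem_erase.mpr ⟨hyu, hy2⟩
          exact Finset.disjoint_left.mp hdisj' hm1 hm2)
      have hcard : (P.image g).card = P.card := by
        apply Finset.card_image_of_injOn
        intro a ha b hb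
        exact hginj a ha b hb
      omega
    obtain ⟨W', hW'card, hW'hit⟩ := IH (U.erase u).card hUcard (U.erase u) F' p
      rfl hF'mem hpack'
    refine ⟨W', hW'card, ?_⟩
    intro T hT
    obtain ⟨x, hx⟩ := hW'hit (T.erase u) ⟨T, hT, rfl⟩
    rw [Finset.mem_inter] at hx
    exact ⟨x, Finset.mem_inter.mpr ⟨Finset.mem_of_mem_erase hx.1, hx.2⟩⟩

end HellyPart

section FinalAssembly
variable [Fintype V] [DecidableEq V] (G : SimpleGraph V) [DecidableRel G.Adj]
    (μ : V → ℝ) (w : Sym2 V → ℝ)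

lemma set_finite_aux {α : Type*} [Finite α] (f : α → ℝ) (S : Set ℝ)
    (h : ∀ r ∈ S, ∃ a, r = f a) : S.Finite :=
  Set.Finite.subset (Set.finite_range f) (fun r hr => by
    obtain ⟨a, ha⟩ := h r hr; exact ⟨a, ha.symm⟩)

lemma phi_lt_iff (hμ : ∀ v, 0 < μ v) {X : Finset V} (hX : X.Nonempty) (c : ℝ) :
    phi G μ w X < c ↔ bdryW G w X < c * vol μ X := by
  rw [phi, div_lt_iff₀ (vol_pos μ hμ hX)]

lemma phi_le_iff (hμ : ∀ v, 0 < μ v) {X : Finset V} (hX : X.Nonempty) (c : ℝ) :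
    phi G μ w X ≤ c ↔ bdryW G w X ≤ c * vol μ X := by
  rw [phi, div_le_iff₀ (vol_pos μ hμ hX)]

/-- Existence of a subpartition into `k` singletons. -/
lemma exists_singleton_subpartition {k : ℕ} (hk : k ≤ Fintype.card V) :
    ∃ A : Fin k → Finset V, IsSubpartition A ∧ ∀ i, ∃ v, A i = {v} := by
  obtain ⟨S, _, hScard⟩ := Finset.exists_subset_card_eq (s := (Finset.univ : Finset V)) (n := k)
    (by simpa using hk)
  set e := S.equivFinOfCardEq hScard with he
  refine ⟨fun i => {(e.symm i : V)}, ⟨fun i => Finset.singleton_nonempty _, ?_⟩,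
    fun i => ⟨_, rfl⟩⟩
  intro i j hij
  rw [Finset.disjoint_singleton]
  intro hc
  exact hij (by
    have := Subtype.coe_injective hc
    exact e.symm.injective this)

end FinalAssembly

theorem forest_hk_eq_ellk_eq_ellUnder [Fintype V] [DecidableEq V]
    (G : SimpleGraph V) [DecidableRel G.Adj] (hG : G.IsAcyclic)
    (μ : V → ℝ) (w : Sym2 V → ℝ) (hμ : ∀ v, 0 < μ v) (hw : ∀ e ∈ G.edgeSet, 0 < w e)
    (k : ℕ) (hk : 1 ≤ k) (hkn : k ≤ Fintype.card V) :
    hkConst G μ w k = ellk G μ w k ∧ hkConst G μ w k = ellUnder G μ w k := by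
  classical
  set n := Fintype.card V with hn
  set m := n - k + 1 with hm
  have hmn : m ≤ n := by omega
  have hkm : k + m = n + 1 := by omega
  -- the three defining sets
  set Sh : Set ℝ := {r | ∃ A : Fin k → Finset V, IsSubpartition A ∧
    r = sSup {s | ∃ i, s = phi G μ w (A i)}} with hSh
  set Sl : Set ℝ := {r | ∃ A : Fin m → Finset V, IsSubpartition A ∧
    r = sInf {s | ∃ I : Finset (Fin m), I.Nonempty ∧ s = phi G μ w (I.biUnion A)}} with hSl
  set Su : Set ℝ := {r | ∃ A : Finset V, A.card = m ∧ r = cheegerConst G μ w A} with hSu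
  have hSh_def : hkConst G μ w k = sInf Sh := rfl
  have hSl_def : ellk G μ w k = sSup Sl := rfl
  have hSu_def : ellUnder G μ w k = sSup Su := rfl
  -- finiteness
  have hSh_fin : Sh.Finite := set_finite_aux
    (fun A : Fin k → Finset V => sSup {s | ∃ i, s = phi G μ w (A i)}) Sh
    (fun r hr => by obtain ⟨A, _, hA⟩ := hr; exact ⟨A, hA⟩)
  have hSl_fin : Sl.Finite := set_finite_aux
    (fun A : Fin m → Finset V =>
      sInf {s | ∃ I : Finset (Fin m), I.Nonempty ∧ s = phi G μ w (I.biUnion A)}) Sl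
    (fun r hr => by obtain ⟨A, _, hA⟩ := hr; exact ⟨A, hA⟩)
  have hSu_fin : Su.Finite := set_finite_aux
    (fun A : Finset V => cheegerConst G μ w A) Su
    (fun r hr => by obtain ⟨A, _, hA⟩ := hr; exact ⟨A, hA⟩)
  have hCh_fin : ∀ A : Finset V,
      {r | ∃ B : Finset V, B ⊆ A ∧ B.Nonempty ∧ r = phi G μ w B}.Finite := fun A =>
    set_finite_aux (fun B : Finset V => phi G μ w B) _
      (fun r hr => by obtain ⟨B, _, _, hB⟩ := hr; exact ⟨B, hB⟩)
  have hInnerH_fin : ∀ A : Fin k → Finset V, {s | ∃ i, s = phi G μ w (A i)}.Finite := fun A =>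
    set_finite_aux (fun i : Fin k => phi G μ w (A i)) _ (fun r hr => hr)
  have hInnerL_fin : ∀ A : Fin m → Finset V,
      {s | ∃ I : Finset (Fin m), I.Nonempty ∧ s = phi G μ w (I.biUnion A)}.Finite := fun A =>
    set_finite_aux (fun I : Finset (Fin m) => phi G μ w (I.biUnion A)) _
      (fun r hr => by obtain ⟨I, _, hI⟩ := hr; exact ⟨I, hI⟩)
  -- nonemptiness of Sh and Sl and Su
  obtain ⟨Ak, hAk, _⟩ := exists_singleton_subpartition (V := V) (k := k) hkn
  obtain ⟨Am, hAm, _⟩ := exists_singleton_subpartition (V := V) (k := m) hmn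
  have hSh_ne : Sh.Nonempty := ⟨_, Ak, hAk, rfl⟩
  have hSl_ne : Sl.Nonempty := ⟨_, Am, hAm, rfl⟩
  have hSu_ne : Su.Nonempty := by
    obtain ⟨S, _, hScard⟩ := Finset.exists_subset_card_eq (s := (Finset.univ : Finset V)) (n := m)
      (by simpa using hmn)
    exact ⟨_, S, hScard, rfl⟩
  -- Step 1 : ellUnder ≤ ellk
  have step1 : ellUnder G μ w k ≤ ellk G μ w k := by
    rw [hSu_def, hSl_def]
    apply csSup_le hSu_ne
    rintro r ⟨A, hAcard, rfl⟩
    set e := A.equivFinOfCardEq hAcard with he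
    set f : Fin m → Finset V := fun i => {(e.symm i : V)} with hf
    have hfsub : IsSubpartition f := by
      constructor
      · intro i; exact Finset.singleton_nonempty _
      · intro i j hij
        rw [hf]
        simp only [Finset.disjoint_singleton]
        intro hc
        exact hij (e.symm.injective (Subtype.coe_injective hc))
    have hmem : sInf {s | ∃ I : Finset (Fin m), I.Nonempty ∧ s = phi G μ w (I.biUnion f)} ∈ Sl :=
      ⟨f, hfsub, rfl⟩
    refine le_trans ?_ (le_csSup hSl_fin.bddAbove hmem)
    -- cheegerConst A ≤ sInf over unions
    apply le_csInf
    · exact ⟨_, {(0 : Fin m)}, Finset.singleton_nonempty _, rfl⟩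
    rintro s ⟨I, hIne, rfl⟩
    apply csInf_le (hCh_fin A).bddBelow
    refine ⟨I.biUnion f, ?_, ?_, rfl⟩
    · intro x hx
      obtain ⟨i, _, hxf⟩ := Finset.mem_biUnion.mp hx
      rw [hf] at hxf
      simp only [Finset.mem_singleton] at hxf
      exact hxf ▸ (e.symm i).2
    · obtain ⟨i, hi⟩ := hIne
      exact ⟨(e.symm i : V), Finset.mem_biUnion.mpr ⟨i, hi, Finset.mem_singleton_self _⟩⟩
  -- hkConst is attained
  have hh_mem : sInf Sh ∈ Sh := hSh_ne.csInf_mem hSh_fin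
  obtain ⟨Astar, hAstar, hAstar_eq⟩ := hh_mem
  have hAstar_le : ∀ i, phi G μ w (Astar i) ≤ sInf Sh := by
    intro i
    rw [hAstar_eq]
    exact le_csSup (hInnerH_fin Astar).bddAbove ⟨i, rfl⟩
  -- Step 2 : ellk ≤ hkConst
  have step2 : ellk G μ w k ≤ hkConst G μ w k := by
    rw [hSl_def, hSh_def]
    apply csSup_le hSl_ne
    rintro r ⟨B, hB, rfl⟩
    by_contra hcon
    push_neg at hcon
    set r := sInf {s | ∃ I : Finset (Fin m), I.Nonempty ∧ s = phi G μ w (I.biUnion B)} with hr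
    -- every union of parts of B has phi ≥ r > sInf Sh
    have hunion_ge : ∀ I : Finset (Fin m), I.Nonempty → r ≤ phi G μ w (I.biUnion B) := by
      intro I hI
      exact csInf_le (hInnerL_fin B).bddBelow ⟨I, hI, rfl⟩
    -- apply the counting lemma
    have hmain : ∀ I ⊆ (Finset.univ : Finset (Fin k)), I.Nonempty →
        ∀ J ⊆ (Finset.univ : Finset (Fin m)),
        I.biUnion Astar ≠ J.biUnion B := by
      intro I _ hIne J _ heq
      have hXne : (I.biUnion Astar).Nonempty := by
        obtain ⟨i, hi⟩ := hIne
        obtain ⟨x, hx⟩ := hAstar.1 i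
        exact ⟨x, Finset.mem_biUnion.mpr ⟨i, hi, hx⟩⟩
      have hJne : J.Nonempty := by
        rcases J.eq_empty_or_nonempty with rfl | h
        · rw [Finset.biUnion_empty] at heq
          exact absurd (heq ▸ hXne) (by simp)
        · exact h
      -- phi of the union is ≤ sInf Sh < r, but also ≥ r
      have h1 : r ≤ phi G μ w (I.biUnion Astar) := heq ▸ hunion_ge J hJne
      have h2 : phi G μ w (I.biUnion Astar) ≤ sInf Sh := by
        rw [phi_le_iff G μ w hμ hXne]
        have hdisj : ∀ i ∈ I, ∀ j ∈ I, i ≠ j → Disjoint (Astar i) (Astar j) :=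
          fun i _ j _ hij => hAstar.2 i j hij
        calc bdryW G w (I.biUnion Astar) ≤ ∑ i ∈ I, bdryW G w (Astar i) :=
              bdryW_biUnion_le G w hw hdisj
        _ ≤ ∑ i ∈ I, sInf Sh * vol μ (Astar i) := by
            apply Finset.sum_le_sum
            intro i _
            exact (phi_le_iff G μ w hμ (hAstar.1 i) _).mp (hAstar_le i)
        _ = sInf Sh * vol μ (I.biUnion Astar) := by
            rw [vol_biUnion μ hdisj, Finset.mul_sum]
      linarith
    have hcount := lemmaC (W := V) (ι := Fin k) (κ := Fin m) k Finset.univ Finset.univ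
      Astar B (by simp)
      (fun i _ => hAstar.1 i) (fun i _ j _ hij => hAstar.2 i j hij)
      (fun j _ => hB.1 j) (fun i _ j _ hij => hB.2 i j hij) hmain
    have hle : (Finset.univ.biUnion Astar ∪ Finset.univ.biUnion B).card ≤ n :=
      Finset.card_le_univ _
    simp only [Finset.card_univ, Fintype.card_fin] at hcount
    omega
  -- Step 3 : hkConst ≤ ellUnder
  have step3 : hkConst G μ w k ≤ ellUnder G μ w k := by
    rw [hSh_def, hSu_def]
    set hstar := sInf Sh with hhstar
    -- family of connected bad sets
    set F : Set (Finset V) := {T | T.Nonempty ∧ conn G T ∧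
      bdryW G w T < hstar * vol μ T} with hF
    have hFmem : ∀ T ∈ F, T ⊆ Finset.univ ∧ T.Nonempty ∧ conn G T :=
      fun T hT => ⟨Finset.subset_univ T, hT.1, hT.2.1⟩
    have hpackF : ∀ P : Finset (Finset V), (↑P : Set (Finset V)) ⊆ F →
        (∀ T₁ ∈ P, ∀ T₂ ∈ P, T₁ ≠ T₂ → Disjoint T₁ T₂) → P.card ≤ k - 1 := by
      intro P hPF hPdisj
      by_contra hcon
      push_neg at hcon
      have hkP : k ≤ P.card := by omega
      obtain ⟨Q, hQP, hQcard⟩ := Finset.exists_subset_card_eq (s := P) (n := k) hkP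
      set e := Q.equivFinOfCardEq hQcard with he
      set A : Fin k → Finset V := fun i => (e.symm i : Finset V) with hA
      have hAF : ∀ i, (A i) ∈ F := fun i => hPF (hQP (e.symm i).2)
      have hsubp : IsSubpartition A := by
        constructor
        · intro i; exact (hAF i).1
        · intro i j hij
          apply hPdisj _ (hQP (e.symm i).2) _ (hQP (e.symm j).2)
          intro hc
          exact hij (e.symm.injective (Subtype.coe_injective hc))
      have hmem : sSup {s | ∃ i, s = phi G μ w (A i)} ∈ Sh := ⟨A, hsubp, rfl⟩
      have h1 : hstar ≤ sSup {s | ∃ i, s = phi G μ w (A i)} :=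
        csInf_le hSh_fin.bddBelow hmem
      have h2 : sSup {s | ∃ i, s = phi G μ w (A i)} ∈
          {s | ∃ i, s = phi G μ w (A i)} := by
        apply Set.Nonempty.csSup_mem
        · have : Nonempty (Fin k) := Fin.pos_iff_nonempty.mp (by omega)
          obtain ⟨i⟩ := this
          exact ⟨_, i, rfl⟩
        · exact hInnerH_fin A
      obtain ⟨i₀, hi₀⟩ := h2
      have h3 : phi G μ w (A i₀) < hstar :=
        (phi_lt_iff G μ w hμ (hAF i₀).1 _).mpr (hAF i₀).2.2
      rw [hi₀] at h1
      linarith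
    obtain ⟨W, hWcard, hWhit⟩ := helly G hG n Finset.univ F (k - 1)
      (by simp [hn]) hFmem hpackF
    -- choose A of size m avoiding W
    have hA₀card : (Finset.univ \ W).card = n - W.card := by
      rw [Finset.card_sdiff_of_subset (Finset.subset_univ W)]
      simp [hn]
    obtain ⟨A, hAsub, hAcard⟩ := Finset.exists_subset_card_eq (s := (Finset.univ \ W)) (n := m)
      (by omega)
    have hAW : ∀ x ∈ A, x ∉ W := by
      intro x hx
      exact (Finset.mem_sdiff.mp (hAsub hx)).2
    have hcheeg : hstar ≤ cheegerConst G μ w A := by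
      apply le_csInf
      · refine ⟨phi G μ w A, A, Finset.Subset.refl A, ?_, rfl⟩
        rw [← Finset.card_pos, hAcard]
        omega
      rintro s ⟨B, hBA, hBne, rfl⟩
      by_contra hcon
      push_neg at hcon
      have hbad : bdryW G w B < hstar * vol μ B :=
        (phi_lt_iff G μ w hμ hBne _).mp hcon
      obtain ⟨B', hB'sub, hB'ne, hB'conn, hB'bad⟩ :=
        exists_conn_bad G μ w hw hμ hstar B.card B rfl hBne hbad
      obtain ⟨x, hx⟩ := hWhit B' ⟨hB'ne, hB'conn, hB'bad⟩
      rw [Finset.mem_inter] at hx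
      exact hAW x (hBA (hB'sub hx.1)) hx.2
    refine le_trans hcheeg (le_csSup hSu_fin.bddAbove ⟨A, hAcard, rfl⟩)
  exact ⟨le_antisymm (step3.trans step1) step2,
    le_antisymm step3 (step1.trans step2)⟩
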